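/- Let q, k, n' ≥ 1 be integers, n = k·n', g = (1, q, q², …, q^{k−1})^T ∈ ℤ^k, and G = I_{n'} ⊗ g ∈ ℤ^{n×n'}. Let M ∈ ℝ^{k×k} be the upper triangular matrix with entries M_{ij} = q^{−(j−i+1)} for j ≥ i and M_{ij} = 0 for j < i, and let B = I_{n'} ⊗ M ∈ ℝ^{n×n}. Then: (1) the columns of B form a basis of the lattice Λ = q^{−k}·G·ℤ^{n'} + ℤⁿ, i.e., B·ℤⁿ = Λ; and (2) the Gram–Schmidt orthogonalization of the columns of B (processed from left to right) equals q^{−1}·Iₙ, so in particular ‖B̃‖ = q^{−1}. -/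

import Mathlib

open scoped Matrix

noncomputable section

/-- The index `b·k + j` of position `j` inside block `b`, for `n = n'·k` coordinates
grouped into `n'` blocks of size `k`. -/
def blockIdx (n' k : ℕ) (b : Fin n') (j : Fin k) : Fin (n' * k) :=
  ⟨b.val * k + j.val, by
    have hb := b.isLt; have hj := j.isLt
    calc b.val * k + j.val < b.val * k + k := by omega
      _ = (b.val + 1) * k := by ring
      _ ≤ n' * k := Nat.mul_le_mul_right k hb⟩

/-- The matrix `G = I_{n'} ⊗ g` with `g = (1, q, q², …, q^{k−1})ᵀ ∈ ℤ^k`, an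
`n × n'` integer matrix (`n = n'·k`) whose `b`-th column has the entries of `g` in
block `b` and zeros elsewhere. -/
def Gmat (q n' k : ℕ) : Matrix (Fin (n' * k)) (Fin n') ℤ :=
  fun i b => if (i : ℕ) / k = (b : ℕ) then (q : ℤ) ^ ((i : ℕ) % k) else 0

/-- The block-diagonal matrix `B = I_{n'} ⊗ M ∈ ℝ^{n×n}` where `M ∈ ℝ^{k×k}` is upper
triangular with `M_{uv} = q^{−(v−u+1)}` for `v ≥ u` and `0` otherwise. -/
def Bmat (q n' k : ℕ) : Matrix (Fin (n' * k)) (Fin (n' * k)) ℝ :=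
  fun i j =>
    if (i : ℕ) / k = (j : ℕ) / k ∧ (i : ℕ) % k ≤ (j : ℕ) % k then
      ((q : ℝ)) ^ (-(((j : ℕ) % k - (i : ℕ) % k : ℕ) + 1) : ℤ)
    else 0

/-- Gram–Schmidt orthogonalization for a finite family of vectors in euclidean space,
processed left to right (a wrapper around `gramSchmidt` providing the order instances). -/
noncomputable def gramSchmidtFin {N : ℕ} [NeZero N]
    (f : Fin N → EuclideanSpace ℝ (Fin N)) : Fin N → EuclideanSpace ℝ (Fin N) :=
  haveI : WellFoundedLT (Fin N) := inferInstance
  InnerProductSpace.gramSchmidt ℝ f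

/-- The columns of `B` as vectors of the euclidean space `ℝⁿ`. -/
def Bcols (q n' k : ℕ) (j : Fin (n' * k)) : EuclideanSpace ℝ (Fin (n' * k)) :=
  (WithLp.equiv 2 (Fin (n' * k) → ℝ)).symm (fun i => Bmat q n' k i j)

/-- **Computation in Corollary 3.4.** Let `q, k, n' ≥ 1`, `n = k·n'`,
`g = (1,q,…,q^{k−1})ᵀ`, `G = I_{n'} ⊗ g ∈ ℤ^{n×n'}`, and let `B = I_{n'} ⊗ M ∈ ℝ^{n×n}`
with `M` upper triangular, `M_{uv} = q^{−(v−u+1)}` for `v ≥ u`.  Then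
(1) the columns of `B` form a basis of the lattice `Λ = q^{−k}·G·ℤ^{n'} + ℤⁿ`, i.e.
`B·ℤⁿ = Λ`; and (2) the Gram–Schmidt orthogonalization of the columns of `B` (processed
from left to right) is `q^{−1}·Iₙ`, so that every Gram–Schmidt vector has length exactly
`q^{−1}` and `‖B̃‖ = q⁻¹`. -/
lemma blockIdx_val (n' k : ℕ) (b : Fin n') (s : Fin k) :
    ((blockIdx n' k b s : ℕ)) = b.val * k + s.val := rfl

lemma blockIdx_div (n' k : ℕ) (b : Fin n') (s : Fin k) :
    ((blockIdx n' k b s : ℕ)) / k = b.val := by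
  have hs := s.isLt
  rw [blockIdx_val, mul_comm, Nat.mul_add_div (by omega), Nat.div_eq_of_lt hs, add_zero]

lemma blockIdx_mod (n' k : ℕ) (b : Fin n') (s : Fin k) :
    ((blockIdx n' k b s : ℕ)) % k = s.val := by
  have hs := s.isLt
  rw [blockIdx_val, mul_comm, Nat.mul_add_mod, Nat.mod_eq_of_lt hs]

lemma sum_blocks {M : Type*} [AddCommMonoid M] {n' k : ℕ} (f : Fin (n' * k) → M) :
    ∑ j, f j = ∑ b : Fin n', ∑ s : Fin k, f (blockIdx n' k b s) := by
  rw [← Equiv.sum_comp (finProdFinEquiv : Fin n' × Fin k ≃ Fin (n' * k)) f,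
    Fintype.sum_prod_type]
  refine Finset.sum_congr rfl fun b _ => Finset.sum_congr rfl fun s _ => ?_
  congr 1
  apply Fin.ext
  have h1 : ((finProdFinEquiv (b, s) : Fin (n' * k)) : ℕ) = s.val + k * b.val := rfl
  have h2 : ((blockIdx n' k b s : Fin (n' * k)) : ℕ) = b.val * k + s.val := rfl
  have h3 : k * b.val = b.val * k := Nat.mul_comm _ _
  omega

lemma div_lt_n' {n' k : ℕ} (hk : 0 < k) (i : Fin (n' * k)) : (i : ℕ) / k < n' :=
  (Nat.div_lt_iff_lt_mul hk).mpr (by have := i.isLt; omega)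

lemma mulVecB (q n' k : ℕ) (z : Fin (n' * k) → ℝ) (i : Fin (n' * k))
    (b₀ : Fin n') (hb : (i : ℕ) / k = b₀.val) :
    (Bmat q n' k).mulVec z i
      = ∑ s : Fin k, if (i : ℕ) % k ≤ s.val then
          (q : ℝ) ^ (-((s.val - (i : ℕ) % k : ℕ) + 1) : ℤ) * z (blockIdx n' k b₀ s) else 0 := by
  rw [Matrix.mulVec, dotProduct, sum_blocks (fun j => Bmat q n' k i j * z j)]
  rw [Finset.sum_eq_single b₀]
  · refine Finset.sum_congr rfl fun s _ => ?_
    unfold Bmat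
    rw [blockIdx_div, blockIdx_mod]
    by_cases hle : (i : ℕ) % k ≤ s.val
    · rw [if_pos ⟨hb, hle⟩, if_pos hle]
    · rw [if_neg (fun h => hle h.2), if_neg hle, zero_mul]
  · intro b _ hbb
    refine Finset.sum_eq_zero fun s _ => ?_
    unfold Bmat
    rw [blockIdx_div, blockIdx_mod, if_neg (fun h => hbb (Fin.ext (by omega))), zero_mul]
  · intro h; exact absurd (Finset.mem_univ b₀) h

lemma mulVecG (q n' k : ℕ) (w : Fin n' → ℤ) (i : Fin (n' * k))
    (b₀ : Fin n') (hb : (i : ℕ) / k = b₀.val) :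
    (Gmat q n' k).mulVec w i = (q : ℤ) ^ ((i : ℕ) % k) * w b₀ := by
  rw [Matrix.mulVec, dotProduct]
  unfold Gmat
  rw [Finset.sum_eq_single b₀]
  · rw [if_pos hb]
  · intro b _ hbb
    rw [if_neg (fun h => hbb (Fin.ext (by omega))), zero_mul]
  · intro h; exact absurd (Finset.mem_univ b₀) h

lemma zpow_nat_cast' (q : ℕ) (m : ℕ) : (q : ℝ) ^ m = (q : ℝ) ^ (m : ℤ) :=
  (zpow_natCast _ _).symm

lemma key1 {q : ℕ} (hq : 1 ≤ q) {k r s : ℕ} (hr : r < k) (hs : s < k) (hle : r ≤ s) :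
    (q : ℝ) ^ (-(((s - r : ℕ) : ℤ) + 1)) = (q : ℝ) ^ (-(k : ℤ)) * ((q : ℝ) ^ r * (q : ℝ) ^ (k - 1 - s)) := by
  have hq0 : (q : ℝ) ≠ 0 := by positivity
  rw [zpow_nat_cast' q r, zpow_nat_cast' q (k - 1 - s), ← zpow_add₀ hq0, ← zpow_add₀ hq0]
  congr 1
  omega

lemma key2 {q : ℕ} (hq : 1 ≤ q) {k r s : ℕ} (hr : r < k) (hs : s < k) (hlt : s < r) :
    (q : ℝ) ^ (-(k : ℤ)) * ((q : ℝ) ^ r * (q : ℝ) ^ (k - 1 - s)) = (q : ℝ) ^ (r - s - 1 : ℕ) := by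
  have hq0 : (q : ℝ) ≠ 0 := by positivity
  rw [zpow_nat_cast' q r, zpow_nat_cast' q (k - 1 - s), zpow_nat_cast' q (r - s - 1),
    ← zpow_add₀ hq0, ← zpow_add₀ hq0]
  congr 1
  omega

lemma incl1 (q n' k : ℕ) (hq : 1 ≤ q) (hk : 1 ≤ k) (z : Fin (n' * k) → ℤ) :
    ∃ (w : Fin n' → ℤ) (y : Fin (n' * k) → ℤ),
      (Bmat q n' k).mulVec (fun i => (z i : ℝ))
        = fun i => (q : ℝ) ^ (-(k : ℤ)) * (((Gmat q n' k).mulVec w) i : ℝ) + (y i : ℝ) := by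
  have hk0 : 0 < k := hk
  refine ⟨fun b => ∑ s : Fin k, (q : ℤ) ^ (k - 1 - s.val) * z (blockIdx n' k b s),
    fun i => -∑ s : Fin k, if s.val < (i : ℕ) % k then
      (q : ℤ) ^ ((i : ℕ) % k - s.val - 1) * z (blockIdx n' k ⟨(i : ℕ) / k, div_lt_n' hk0 i⟩ s)
      else 0, ?_⟩
  funext i
  set b₀ : Fin n' := ⟨(i : ℕ) / k, div_lt_n' hk0 i⟩ with hb₀
  have hb : (i : ℕ) / k = b₀.val := rfl
  have hr : (i : ℕ) % k < k := Nat.mod_lt _ hk0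
  rw [mulVecB q n' k _ i b₀ hb, mulVecG q n' k _ i b₀ hb]
  push_cast
  rw [Finset.mul_sum, Finset.mul_sum]
  rw [← Finset.sum_neg_distrib, ← Finset.sum_add_distrib]
  refine Finset.sum_congr rfl fun s _ => ?_
  by_cases hle : (i : ℕ) % k ≤ s.val
  · rw [if_pos hle, if_neg (not_lt.mpr hle), neg_zero, add_zero,
      key1 hq hr s.isLt hle]
    ring
  · rw [if_neg hle, if_pos (not_le.mp hle)]
    have := key2 hq hr s.isLt (not_le.mp hle)
    calc (0:ℝ) = ((q:ℝ)^(-(k:ℤ)) * ((q:ℝ)^((i:ℕ)%k) * (q:ℝ)^(k-1-s.val))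
          - (q:ℝ)^((i:ℕ)%k - s.val - 1 : ℕ)) * (z (blockIdx n' k b₀ s) : ℝ) := by
          rw [this]; ring
      _ = _ := by ring

lemma filter_range_eq_Ico (r k : ℕ) :
    (Finset.range k).filter (fun s => r ≤ s) = Finset.Ico r k := by
  ext s
  simp [Finset.mem_filter, Finset.mem_range, Finset.mem_Ico]
  omega

lemma incl2 (q n' k : ℕ) (hq : 1 ≤ q) (hk : 1 ≤ k)
    (w : Fin n' → ℤ) (y : Fin (n' * k) → ℤ) :
    ∃ z : Fin (n' * k) → ℤ,
      (fun i => (q : ℝ) ^ (-(k : ℤ)) * (((Gmat q n' k).mulVec w) i : ℝ) + (y i : ℝ))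
        = (Bmat q n' k).mulVec (fun i => (z i : ℝ)) := by
  have hk0 : 0 < k := hk
  have hq0 : (q : ℝ) ≠ 0 := by positivity
  set yext : ℕ → ℤ := fun m => if h : m < n' * k then y ⟨m, h⟩ else 0 with hyext
  refine ⟨fun i => q * y i + (if (i : ℕ) % k = k - 1 then w ⟨(i : ℕ) / k, div_lt_n' hk0 i⟩
    else - yext ((i : ℕ) + 1)), ?_⟩
  funext i
  set b₀ : Fin n' := ⟨(i : ℕ) / k, div_lt_n' hk0 i⟩ with hb₀
  have hb : (i : ℕ) / k = b₀.val := rfl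
  clear_value b₀
  rw [mulVecB q n' k _ i b₀ hb, mulVecG q n' k _ i b₀ hb]
  beta_reduce
  set r : ℕ := (i : ℕ) % k with hrdef
  have hr : r < k := Nat.mod_lt _ hk0
  have hival : (i : ℕ) = b₀.val * k + r := by
    have h1 := Nat.div_add_mod (i : ℕ) k
    have h2 : k * ((i : ℕ) / k) = b₀.val * k := by rw [hb, Nat.mul_comm]
    omega
  clear_value r
  set Y : ℕ → ℝ := fun m => ((yext m : ℤ) : ℝ) with hY
  set F : ℕ → ℝ := fun s => if s < k then (q : ℝ) ^ ((r : ℤ) - s) * Y (b₀.val * k + s) else 0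
    with hF
  have hyblk : ∀ s : Fin k, yext (b₀.val * k + s.val) = y (blockIdx n' k b₀ s) := by
    intro s
    have hm : b₀.val * k + s.val < n' * k := (blockIdx n' k b₀ s).isLt
    rw [hyext]
    simp only
    rw [dif_pos hm]
    exact congrArg y (Fin.ext rfl)
  have hz : ∀ s : Fin k,
      ((q * y (blockIdx n' k b₀ s) + (if ((blockIdx n' k b₀ s : ℕ)) % k = k - 1 then
        w ⟨((blockIdx n' k b₀ s : ℕ)) / k, div_lt_n' hk0 _⟩
        else - yext (((blockIdx n' k b₀ s : ℕ)) + 1)) : ℤ) : ℝ)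
      = q * Y (b₀.val * k + s.val) + (if s.val = k - 1 then (w b₀ : ℝ)
          else - Y (b₀.val * k + s.val + 1)) := by
    intro s
    have hcond : ((blockIdx n' k b₀ s : ℕ)) % k = s.val := blockIdx_mod n' k b₀ s
    simp only [hY]
    by_cases hsk : s.val = k - 1
    · rw [if_pos (by rw [hcond]; exact hsk), if_pos hsk]
      have hw : (⟨((blockIdx n' k b₀ s : ℕ)) / k, div_lt_n' hk0 _⟩ : Fin n') = b₀ :=
        Fin.ext (blockIdx_div n' k b₀ s)
      rw [hw, hyblk s]
      push_cast
      ring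
    · rw [if_neg (by rw [hcond]; exact hsk), if_neg hsk]
      have hone : ((blockIdx n' k b₀ s : ℕ)) + 1 = b₀.val * k + s.val + 1 := rfl
      rw [hone, hyblk s]
      push_cast
      ring
  have hsum1 : (∑ s : Fin k, if r ≤ s.val then
        (q : ℝ) ^ (-(((s.val - r : ℕ) : ℤ) + 1)) *
          ((q * y (blockIdx n' k b₀ s) + (if ((blockIdx n' k b₀ s : ℕ)) % k = k - 1 then
            w ⟨((blockIdx n' k b₀ s : ℕ)) / k, div_lt_n' hk0 _⟩
            else - yext (((blockIdx n' k b₀ s : ℕ)) + 1)) : ℤ) : ℝ) else 0)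
      = ∑ s ∈ Finset.range k, (if r ≤ s then
          (q : ℝ) ^ ((r : ℤ) - s - 1) *
            (q * Y (b₀.val * k + s) + (if s = k - 1 then (w b₀ : ℝ)
              else - Y (b₀.val * k + s + 1))) else 0) := by
    rw [← Fin.sum_univ_eq_sum_range]
    refine Finset.sum_congr rfl fun s _ => ?_
    by_cases hle : r ≤ s.val
    · rw [if_pos hle, if_pos hle, hz s]
      congr 1
      congr 1
      omega
    · rw [if_neg hle, if_neg hle]
  rw [hsum1]
  rw [← Finset.sum_filter, filter_range_eq_Ico]
  have hterm : ∀ s ∈ Finset.Ico r k,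
      (q : ℝ) ^ ((r : ℤ) - s - 1) *
          (q * Y (b₀.val * k + s) + (if s = k - 1 then (w b₀ : ℝ)
            else - Y (b₀.val * k + s + 1)))
      = (F s - F (s + 1)) + (if s = k - 1 then (q : ℝ) ^ ((r : ℤ) - k) * (w b₀ : ℝ) else 0) := by
    intro s hs
    rw [Finset.mem_Ico] at hs
    have e1 : (q : ℝ) ^ ((r : ℤ) - s - 1) * q = (q : ℝ) ^ ((r : ℤ) - s) := by
      have h := (zpow_add₀ hq0 ((r : ℤ) - s - 1) 1).symm
      rw [zpow_one] at h
      rw [h]; congr 1; ring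
    have hFs : F s = (q : ℝ) ^ ((r : ℤ) - s) * Y (b₀.val * k + s) := by
      rw [hF]; simp only [if_pos hs.2]
    by_cases hsk : s = k - 1
    · rw [if_pos hsk, if_pos hsk]
      have hFs1 : F (s + 1) = 0 := by
        rw [hF]; simp only; rw [if_neg (by omega)]
      have e2 : (q : ℝ) ^ ((r : ℤ) - s - 1) = (q : ℝ) ^ ((r : ℤ) - k) := by
        congr 1; omega
      rw [hFs, hFs1]
      calc (q : ℝ) ^ ((r : ℤ) - s - 1) * (q * Y (b₀.val * k + s) + (w b₀ : ℝ))
          = ((q : ℝ) ^ ((r : ℤ) - s - 1) * q) * Y (b₀.val * k + s)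
            + (q : ℝ) ^ ((r : ℤ) - s - 1) * (w b₀ : ℝ) := by ring
        _ = _ := by rw [e1, e2]; ring
    · rw [if_neg hsk, if_neg hsk]
      have hs1 : s + 1 < k := by omega
      have hFs1 : F (s + 1) = (q : ℝ) ^ ((r : ℤ) - s - 1) * Y (b₀.val * k + s + 1) := by
        rw [hF]
        simp only [if_pos hs1]
        have hcast : ((r : ℤ) - ((s + 1 : ℕ) : ℤ)) = (r : ℤ) - s - 1 := by push_cast; ring
        rw [hcast, show b₀.val * k + (s + 1) = b₀.val * k + s + 1 from by ring]
      rw [hFs, hFs1, add_zero]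
      calc (q : ℝ) ^ ((r : ℤ) - s - 1) * (q * Y (b₀.val * k + s) + - Y (b₀.val * k + s + 1))
          = ((q : ℝ) ^ ((r : ℤ) - s - 1) * q) * Y (b₀.val * k + s)
            - (q : ℝ) ^ ((r : ℤ) - s - 1) * Y (b₀.val * k + s + 1) := by ring
        _ = _ := by rw [e1]
  rw [Finset.sum_congr rfl hterm, Finset.sum_add_distrib]
  have htel : ∑ s ∈ Finset.Ico r k, (F s - F (s + 1)) = F r - F k := by
    rw [Finset.sum_Ico_eq_sub _ (le_of_lt hr), Finset.sum_range_sub' F, Finset.sum_range_sub' F]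
    ring
  have hite : (∑ s ∈ Finset.Ico r k, if s = k - 1 then (q : ℝ) ^ ((r : ℤ) - k) * (w b₀ : ℝ) else 0)
      = (q : ℝ) ^ ((r : ℤ) - k) * (w b₀ : ℝ) := by
    rw [Finset.sum_ite_eq' (Finset.Ico r k) (k - 1) (fun _ => (q : ℝ) ^ ((r : ℤ) - k) * (w b₀ : ℝ))]
    rw [if_pos (Finset.mem_Ico.mpr ⟨by omega, by omega⟩)]
  rw [htel, hite]
  have hFr : F r = Y (b₀.val * k + r) := by
    rw [hF]; simp only [if_pos hr, sub_self, zpow_zero, one_mul]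
  have hFk : F k = 0 := by rw [hF]; simp
  have hYi : Y (b₀.val * k + r) = (y i : ℝ) := by
    simp only [hY]
    rw [hyext]
    simp only
    rw [dif_pos (show b₀.val * k + r < n' * k by omega)]
    norm_cast
    exact congrArg y (Fin.ext hival.symm)
  rw [hFr, hFk, hYi]
  push_cast
  have hpow : (q : ℝ) ^ (-(k : ℤ)) * ((q : ℝ) ^ r * (w b₀ : ℝ))
      = (q : ℝ) ^ ((r : ℤ) - k) * (w b₀ : ℝ) := by
    rw [zpow_nat_cast' q r, ← mul_assoc, ← zpow_add₀ hq0]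
    congr 2
    ring
  rw [hpow]
  ring

lemma Bmat_diag (q n' k : ℕ) (j : Fin (n' * k)) : Bmat q n' k j j = (q : ℝ) ^ (-1 : ℤ) := by
  simp [Bmat]

lemma Bmat_lower (q n' k : ℕ) (m j : Fin (n' * k)) (h : j < m) : Bmat q n' k m j = 0 := by
  unfold Bmat
  rw [if_neg]
  rintro ⟨h1, h2⟩
  have e1 := Nat.div_add_mod (m : ℕ) k
  have e2 := Nat.div_add_mod (j : ℕ) k
  rw [h1] at e1
  have hlt : (j : ℕ) < (m : ℕ) := h
  omega

lemma gs_eq (q n' k : ℕ) [NeZero (n' * k)] (hq : 1 ≤ q) :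
    ∀ j, gramSchmidtFin (Bcols q n' k) j = (q : ℝ)⁻¹ • EuclideanSpace.single j (1 : ℝ) := by
  have hq0 : (q : ℝ) ≠ 0 := by positivity
  haveI : WellFoundedLT (Fin (n' * k)) := inferInstance
  have hGS : gramSchmidtFin (Bcols q n' k) = InnerProductSpace.gramSchmidt ℝ (Bcols q n' k) := rfl
  rw [hGS]
  intro j
  induction j using WellFoundedLT.induction with
  | ind j ih =>
  rw [InnerProductSpace.gramSchmidt_def]
  have hproj : ∀ i ∈ Finset.Iio j,
      ((ℝ ∙ InnerProductSpace.gramSchmidt ℝ (Bcols q n' k) i).starProjection (Bcols q n' k j))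
      = (Bmat q n' k i j) • EuclideanSpace.single i (1 : ℝ) := by
    intro i hi
    rw [ih i (Finset.mem_Iio.mp hi),
      Submodule.starProjection_singleton]
    have h1 : (inner ℝ (EuclideanSpace.single i (1:ℝ)) (Bcols q n' k j) : ℝ) = Bmat q n' k i j := by
      rw [EuclideanSpace.inner_single_left]
      simp [Bcols]
    rw [real_inner_smul_left, h1, norm_smul, EuclideanSpace.norm_single, smul_smul, norm_one,
      mul_one, Real.norm_eq_abs, abs_of_nonneg (by positivity : (0:ℝ) ≤ (q:ℝ)⁻¹)]
    congr 1
    simp only [RCLike.ofReal_real_eq_id, id_eq]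
    field_simp
  rw [Finset.sum_congr rfl hproj]
  ext m
  have hsingle : ∀ i : Fin (n' * k), (EuclideanSpace.single i (1:ℝ)) m = if m = i then 1 else 0 :=
    fun i => EuclideanSpace.single_apply i 1 m
  have hsum : (∑ i ∈ Finset.Iio j, (Bmat q n' k i j) • EuclideanSpace.single i (1 : ℝ)) m
      = if m ∈ Finset.Iio j then Bmat q n' k m j else 0 := by
    rw [← Finset.sum_ite_eq (Finset.Iio j) m (fun i => Bmat q n' k i j)]
    rw [WithLp.ofLp_sum, Finset.sum_apply]
    refine Finset.sum_congr rfl fun i _ => ?_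
    rw [PiLp.smul_apply, hsingle i]
    simp [eq_comm]
  rw [PiLp.sub_apply, hsum, PiLp.smul_apply, hsingle j]
  have hcol : Bcols q n' k j m = Bmat q n' k m j := rfl
  rw [hcol]
  by_cases hmj : m = j
  · subst hmj
    simp [Bmat_diag, zpow_neg_one]
  · simp only [if_neg hmj, smul_zero]
    rcases lt_or_gt_of_ne hmj with hlt | hgt
    · rw [if_pos (Finset.mem_Iio.mpr hlt)]; ring
    · rw [if_neg (by simpa using not_lt.mpr hgt.le), Bmat_lower q n' k m j hgt]
      simp

theorem tensor_basis_gramSchmidt (q n' k : ℕ) [NeZero (n' * k)]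
    (hq : 1 ≤ q) (hn' : 1 ≤ n') (hk : 1 ≤ k) :
    ({x : Fin (n' * k) → ℝ | ∃ z : Fin (n' * k) → ℤ,
        x = (Bmat q n' k).mulVec (fun i => (z i : ℝ))}
      = {x : Fin (n' * k) → ℝ | ∃ (w : Fin n' → ℤ) (y : Fin (n' * k) → ℤ),
          x = fun i => (q : ℝ) ^ (-(k : ℤ)) * (((Gmat q n' k).mulVec w) i : ℝ) + (y i : ℝ)})
    ∧ (∀ j : Fin (n' * k),
        gramSchmidtFin (Bcols q n' k) j = (q : ℝ)⁻¹ • EuclideanSpace.single j (1 : ℝ))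
    ∧ (∀ j : Fin (n' * k), ‖gramSchmidtFin (Bcols q n' k) j‖ = (q : ℝ)⁻¹) := by
  refine ⟨?_, fun j => gs_eq q n' k hq j, fun j => ?_⟩
  · ext x
    simp only [Set.mem_setOf_eq]
    constructor
    · rintro ⟨z, rfl⟩
      obtain ⟨w, y, h⟩ := incl1 q n' k hq hk z
      exact ⟨w, y, h⟩
    · rintro ⟨w, y, rfl⟩
      obtain ⟨z, h⟩ := incl2 q n' k hq hk w y
      exact ⟨z, h⟩
  · rw [gs_eq q n' k hq j, norm_smul, EuclideanSpace.norm_single]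
    rw [Real.norm_eq_abs, abs_of_nonneg (by positivity)]
    simp

end
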